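/- A space X is star-K-Scheepers if and only if for every sequence (U_n) of open covers of X there is a sequence (K_n) of compact subsets of X such that {St(K_n,U_n) : n ∈ ℕ} is a weakly groupable open cover of X. -/
import Mathlib


open Set

/-- Star of a set `A` with respect to a family `P`: `St(A,P) = ⋃{B ∈ P : A ∩ B ≠ ∅}`. -/
def st {X : Type*} (A : Set X) (P : Set (Set X)) : Set X :=
  ⋃₀ {B | B ∈ P ∧ (A ∩ B).Nonempty}

/-- `U` is an open cover of the space. -/
def IsOpenCover {X : Type*} [TopologicalSpace X] (U : Set (Set X)) : Prop :=
  (∀ V ∈ U, IsOpen V) ∧ ⋃₀ U = Set.univ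

/-- An ω-cover: an open cover such that every finite subset lies in some member. -/
def IsOmegaCover {X : Type*} [TopologicalSpace X] (U : Set (Set X)) : Prop :=
  IsOpenCover U ∧ ∀ F : Set X, F.Finite → ∃ V ∈ U, F ⊆ V

/-- The star-K-Scheepers property. -/
def StarKScheepers (X : Type*) [TopologicalSpace X] : Prop :=
  ∀ U : ℕ → Set (Set X), (∀ n, IsOpenCover (U n)) →
    ∃ K : ℕ → Set X, (∀ n, IsCompact (K n)) ∧
      IsOmegaCover {S | ∃ n, S = st (K n) (U n)}

/-- A weakly groupable open cover. -/
def IsWeaklyGroupable {X : Type*} [TopologicalSpace X] (U : Set (Set X)) : Prop :=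
  IsOpenCover U ∧ ∃ V : ℕ → Set (Set X),
    (∀ n, (V n).Finite) ∧ (∀ m n, m ≠ n → Disjoint (V m) (V n)) ∧
    U = ⋃ n, V n ∧ ∀ F : Set X, F.Finite → ∃ n, F ⊆ ⋃₀ (V n)

lemma st_mono {X : Type*} {A A' : Set X} (h : A ⊆ A') (P : Set (Set X)) :
    st A P ⊆ st A' P := by
  rintro x ⟨B, ⟨hBP, hne⟩, hxB⟩
  exact ⟨B, ⟨hBP, hne.mono (inter_subset_inter h Subset.rfl)⟩, hxB⟩

/-- `X` is star-K-Scheepers iff for every sequence of open covers there are compact sets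
whose stars form a weakly groupable open cover. -/
theorem starKScheepers_iff_weakly_groupable {X : Type*} [TopologicalSpace X] :
    StarKScheepers X ↔
      ∀ U : ℕ → Set (Set X), (∀ n, IsOpenCover (U n)) →
        ∃ K : ℕ → Set X, (∀ n, IsCompact (K n)) ∧
          IsWeaklyGroupable {S | ∃ n, S = st (K n) (U n)} := by
  constructor
  · -- easy direction: an ω-cover is weakly groupable
    intro hS U hU
    classical
    obtain ⟨K, hK, hOC, hω⟩ := hS U hU
    refine ⟨K, hK, hOC, ?_⟩
    set S : ℕ → Set X := fun n => st (K n) (U n) with hSdef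
    refine ⟨fun n => {T | T = S n ∧ ∀ m < n, S m ≠ S n}, ?_, ?_, ?_, ?_⟩
    · intro n
      exact (Set.finite_singleton (S n)).subset (fun T hT => hT.1)
    · intro m n hmn
      rw [Set.disjoint_left]
      rintro T ⟨hTm, hm⟩ ⟨hTn, hn⟩
      rcases lt_or_gt_of_ne hmn with h | h
      · exact hn m h (by rw [← hTm, hTn])
      · exact hm n h (by rw [← hTn, hTm])
    · ext T
      simp only [Set.mem_setOf_eq, Set.mem_iUnion]
      constructor
      · rintro ⟨n, hn⟩
        have hex : ∃ k, T = S k := ⟨n, hn⟩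
        refine ⟨Nat.find hex, Nat.find_spec hex, ?_⟩
        intro m hm hSm
        exact Nat.find_min hex hm (by rw [hSm]; exact Nat.find_spec hex)
      · rintro ⟨n, hT, _⟩
        exact ⟨n, hT⟩
    · intro F hF
      obtain ⟨V, hVC, hFV⟩ := hω F hF
      have hex : ∃ k, V = S k := hVC
      refine ⟨Nat.find hex, fun x hx => ⟨V, ⟨Nat.find_spec hex, ?_⟩, hFV hx⟩⟩
      intro m hm hSm
      exact Nat.find_min hex hm (by rw [hSm]; exact Nat.find_spec hex)
  · -- hard direction
    intro h U hU
    classical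
    set W : ℕ → Set (Set X) := fun n =>
      {B | ∃ f : ℕ → Set X, (∀ i, f i ∈ U i) ∧ B = ⋂ i ∈ Finset.range (n+1), f i} with hWdef
    have hW : ∀ n, IsOpenCover (W n) := by
      intro n
      constructor
      · rintro B ⟨f, hf, rfl⟩
        exact isOpen_biInter_finset (fun i _ => (hU i).1 (f i) (hf i))
      · apply eq_univ_of_forall
        intro x
        have hx : ∀ i, ∃ A, A ∈ U i ∧ x ∈ A := by
          intro i
          have h2 : x ∈ ⋃₀ U i := (hU i).2 ▸ mem_univ x
          obtain ⟨A, hA, hxA⟩ := h2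
          exact ⟨A, hA, hxA⟩
        choose f hf hxf using hx
        refine ⟨_, ⟨f, hf, rfl⟩, ?_⟩
        simp only [Set.mem_iInter]
        intro i _
        exact hxf i
    obtain ⟨K, hK, hOC, Vg, hVfin, hVdisj, hVunion, hVgroup⟩ := h W hW
    -- monotonicity of stars across the W's
    have hWU : ∀ n i, n ≤ i → ∀ A : Set X, st A (W i) ⊆ st A (U n) := by
      intro n i hni A x hx
      obtain ⟨B, ⟨⟨f, hf, rfl⟩, hne⟩, hxB⟩ := hx
      have hBf : (⋂ j ∈ Finset.range (i+1), f j) ⊆ f n := by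
        intro y hy
        simp only [Set.mem_iInter] at hy
        exact hy n (Finset.mem_range.mpr (Nat.lt_succ_of_le hni))
      exact ⟨f n, ⟨hf n, hne.mono (inter_subset_inter Subset.rfl hBf)⟩, hBf hxB⟩
    -- index function: least index realizing a star
    set idx : Set X → ℕ := fun T =>
      if hT : ∃ n, T = st (K n) (W n) then Nat.find hT else 0 with hidxdef
    have hidx : ∀ T, (∃ n, T = st (K n) (W n)) → T = st (K (idx T)) (W (idx T)) := by
      intro T hT
      simp only [hidxdef, dif_pos hT]
      exact Nat.find_spec hT
    have hVC : ∀ m, ∀ T ∈ Vg m, ∃ n, T = st (K n) (W n) := by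
      intro m T hT
      have : T ∈ ⋃ n, Vg n := mem_iUnion.mpr ⟨m, hT⟩
      rw [← hVunion] at this
      exact this
    -- injectivity of minimal index across nonempty groups
    have hinj : ∀ m₁ m₂, (Vg m₁).Nonempty → (Vg m₂).Nonempty →
        sInf (idx '' Vg m₁) = sInf (idx '' Vg m₂) → m₁ = m₂ := by
      intro m₁ m₂ h₁ h₂ heq
      by_contra hne
      have hm₁ : sInf (idx '' Vg m₁) ∈ idx '' Vg m₁ := Nat.sInf_mem (h₁.image idx)
      have hm₂ : sInf (idx '' Vg m₂) ∈ idx '' Vg m₂ := Nat.sInf_mem (h₂.image idx)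
      obtain ⟨T₁, hT₁, hi₁⟩ := hm₁
      obtain ⟨T₂, hT₂, hi₂⟩ := hm₂
      have hTeq : T₁ = T₂ := by
        rw [hidx T₁ (hVC m₁ T₁ hT₁), hidx T₂ (hVC m₂ T₂ hT₂), hi₁, hi₂, heq]
      exact (hVdisj m₁ m₂ hne).ne_of_mem hT₁ hT₂ hTeq
    -- the new compact sets
    set K' : ℕ → Set X := fun n =>
      if hn : ∃ m, (Vg m).Nonempty ∧ sInf (idx '' Vg m) = n then
        ⋃ T ∈ Vg (Classical.choose hn), K (idx T)
      else ∅ with hK'def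
    have hK'compact : ∀ n, IsCompact (K' n) := by
      intro n
      by_cases hn : ∃ m, (Vg m).Nonempty ∧ sInf (idx '' Vg m) = n
      · simp only [hK'def, dif_pos hn]
        exact (hVfin _).isCompact_biUnion (fun T _ => hK _)
      · simp only [hK'def, dif_neg hn]
        exact isCompact_empty
    refine ⟨K', hK'compact, ?_⟩
    have hω : ∀ F : Set X, F.Finite →
        ∃ V ∈ {S | ∃ n, S = st (K' n) (U n)}, F ⊆ V := by
      intro F hF
      obtain ⟨m, hFm⟩ := hVgroup F hF
      by_cases hne : (Vg m).Nonempty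
      · set n := sInf (idx '' Vg m) with hndef
        have hmem : ∃ m', (Vg m').Nonempty ∧ sInf (idx '' Vg m') = n := ⟨m, hne, rfl⟩
        have hspec := Classical.choose_spec hmem
        have hmeq : Classical.choose hmem = m := hinj _ m hspec.1 hne hspec.2
        refine ⟨st (K' n) (U n), ⟨n, rfl⟩, ?_⟩
        intro x hx
        obtain ⟨T, hT, hxT⟩ := hFm hx
        have hle : n ≤ idx T := Nat.sInf_le ⟨T, hT, rfl⟩
        have hKsub : K (idx T) ⊆ K' n := by
          simp only [hK'def, dif_pos hmem, hmeq]
          exact Set.subset_biUnion_of_mem (u := fun T => K (idx T)) hT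
        have hxst : x ∈ st (K (idx T)) (W (idx T)) := by
          rw [← hidx T (hVC m T hT)]; exact hxT
        exact st_mono hKsub (U n) (hWU n (idx T) hle (K (idx T)) hxst)
      · refine ⟨st (K' 0) (U 0), ⟨0, rfl⟩, ?_⟩
        intro x hx
        have := hFm hx
        rw [not_nonempty_iff_eq_empty.mp hne] at this
        simp at this
    refine ⟨⟨?_, ?_⟩, hω⟩
    · rintro S ⟨n, rfl⟩
      exact isOpen_sUnion (fun B hB => (hU n).1 B hB.1)
    · apply eq_univ_of_forall
      intro x
      obtain ⟨V, hV, hxV⟩ := hω {x} (finite_singleton x)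
      exact ⟨V, hV, hxV rfl⟩
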